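/- (Proposition 3.3) Let (Λ^k, z^k, w^k), ε_k be a singular sequence of normalized central configurations of the N-vortex problem with vorticities Γ_1, …, Γ_N ∈ ℝ∖{0}. Suppose the vertices 1, 2, 3 form an isolated triangle of z-strokes: w^k_i − w^k_j ≈ ε_k² for all pairs i < j in {1,2,3}, and ε_k² ≺ w^k_i − w^k_l for all i ∈ {1,2,3} and l ∉ {1,2,3}; and suppose none of the vertices 1, 2, 3 is z-circled: z^k_j ≺ ε_k^{-2} for j ∈ {1,2,3}. Then L₁₂₃ = Γ_1Γ_2 + Γ_2Γ_3 + Γ_3Γ_1 = 0. -/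

import Mathlib

open Finset Filter Topology

/-- Normalized central configuration of the planar N-vortex problem (N = M + 2),
in the complexified variables (Λ, z, w), with the normalizations removing the
translation, rotation and dilation freedoms. -/
def IsNCC {M : ℕ} (Γ : Fin (M + 2) → ℝ) (Λ : ℂ) (z w : Fin (M + 2) → ℂ) : Prop :=
  Λ ≠ 0 ∧ Function.Injective z ∧ Function.Injective w ∧
  (∀ n, Λ * z n =
    ∑ j ∈ Finset.univ.filter (fun j => j ≠ n), (Γ j : ℂ) / (w n - w j)) ∧
  (∀ n, Λ⁻¹ * w n =
    ∑ j ∈ Finset.univ.filter (fun j => j ≠ n), (Γ j : ℂ) / (z n - z j)) ∧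
  z 1 - z 0 = w 1 - w 0

/-- max(max_n |z_n|, max_{i ≠ j} |w_i − w_j|⁻¹). -/
noncomputable def bigSup {M : ℕ} (z w : Fin (M + 2) → ℂ) : ℝ :=
  sSup ({r | ∃ n, r = ‖z n‖} ∪
        {r | ∃ i j, i ≠ j ∧ r = ‖w i - w j‖⁻¹})

/-- a ≺ b : the ratio a/b tends to 0. -/
def Prec (a b : ℕ → ℂ) : Prop := Tendsto (fun k => a k / b k) atTop (nhds 0)

/-- a ⪯ b : the ratio a/b is bounded. -/
def BddRatio (a b : ℕ → ℂ) : Prop := ∃ C : ℝ, ∀ k, ‖a k / b k‖ ≤ C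

/-- a ≈ b : both a/b and b/a are bounded. -/
def SimEq (a b : ℕ → ℂ) : Prop := BddRatio a b ∧ BddRatio b a

/-- A singular sequence of normalized central configurations: |Λ^k| = 1,
ε_k > 0 tends to 0, and the maximal components of 𝒵 and 𝒲 both equal ε_k⁻². -/
def IsSingularSeq {M : ℕ} (Γ : Fin (M + 2) → ℝ) (Λ : ℕ → ℂ)
    (z w : ℕ → Fin (M + 2) → ℂ) (ε : ℕ → ℝ) : Prop :=
  (∀ k, IsNCC Γ (Λ k) (z k) (w k)) ∧
  (∀ k, ‖Λ k‖ = 1) ∧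
  (∀ k, 0 < ε k) ∧ Tendsto ε atTop (nhds 0) ∧
  (∀ k, bigSup (z k) (w k) = ε k ^ (-2 : ℤ)) ∧
  (∀ k, bigSup (w k) (z k) = ε k ^ (-2 : ℤ))

set_option linter.unusedVariables false in
lemma bdd_mul_null {f g : ℕ → ℂ} {C : ℝ} (hf : ∀ k, ‖f k‖ ≤ C)
    (hg : Tendsto g atTop (nhds 0)) :
    Tendsto (fun k => f k * g k) atTop (nhds 0) := by
  have h0 : Tendsto (fun k => C * ‖g k‖) atTop (nhds 0) := by
    have := (continuous_norm.tendsto (0:ℂ)).comp hg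
    simpa using this.const_mul C
  rw [tendsto_zero_iff_norm_tendsto_zero]
  refine squeeze_zero (fun k => norm_nonneg _) (fun k => ?_) h0
  have h1 : ‖f k * g k‖ = ‖f k‖ * ‖g k‖ := by
    simp
  rw [h1]
  exact mul_le_mul_of_nonneg_right (hf k) (norm_nonneg _)


/-- Proposition 3.3: an isolated z-stroke triangle (vertices 1, 2, 3, here indices
0, 1, 2) with no z-circled vertex forces L₁₂₃ = 0. -/
theorem isolated_triangle_no_circle
    {M : ℕ} (Γ : Fin (M + 3) → ℝ) (hΓ : ∀ j, Γ j ≠ 0)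
    (Λ : ℕ → ℂ) (z w : ℕ → Fin (M + 3) → ℂ) (ε : ℕ → ℝ)
    (hsing : IsSingularSeq Γ Λ z w ε)
    (hstroke : ∀ i ∈ ({0, 1, 2} : Finset (Fin (M + 3))),
      ∀ j ∈ ({0, 1, 2} : Finset (Fin (M + 3))), i ≠ j →
        SimEq (fun k => w k i - w k j) (fun k => ((ε k : ℂ)) ^ 2))
    (hiso : ∀ i ∈ ({0, 1, 2} : Finset (Fin (M + 3))),
      ∀ l ∉ ({0, 1, 2} : Finset (Fin (M + 3))),
        Prec (fun k => ((ε k : ℂ)) ^ 2) (fun k => w k i - w k l))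
    (hnocirc : ∀ j ∈ ({0, 1, 2} : Finset (Fin (M + 3))),
      Prec (fun k => z k j) (fun k => ((ε k ^ (-2 : ℤ) : ℝ) : ℂ))) :
    Γ 0 * Γ 1 + Γ 1 * Γ 2 + Γ 2 * Γ 0 = 0 := by
  obtain ⟨hncc, hΛ1, hεpos, hε0, hZ, hW⟩ := hsing
  have h01 : (0 : Fin (M+3)) ≠ 1 := by simp [Fin.ext_iff]
  have h02 : (0 : Fin (M+3)) ≠ 2 := by simp [Fin.ext_iff, Nat.mod_eq_of_lt (show 2 < M + 3 by omega)]
  have h12 : (1 : Fin (M+3)) ≠ 2 := by simp [Fin.ext_iff, Nat.mod_eq_of_lt (show 2 < M + 3 by omega)]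
  set T : Finset (Fin (M+3)) := {0, 1, 2} with hT
  have hεne : ∀ k, (ε k : ℂ) ≠ 0 := fun k => by
    exact_mod_cast Complex.ofReal_ne_zero.mpr (hεpos k).ne'
  -- the "remainder" sums over vertices outside the triangle
  set R : Fin (M+3) → ℕ → ℂ :=
    fun n k => ∑ l ∈ univ.filter (fun l => l ∉ T), (Γ l : ℂ) / (w k n - w k l) with hR
  -- split of the interaction sum for a triangle vertex
  have hsplit : ∀ k, ∀ n ∈ T,
      (∑ j ∈ univ.filter (fun j => j ≠ n), (Γ j : ℂ) / (w k n - w k j))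
        = (∑ j ∈ T.filter (fun j => j ≠ n), (Γ j : ℂ) / (w k n - w k j)) + R n k := by
    intro k n hn
    have hset : univ.filter (fun j => j ≠ n)
        = T.filter (fun j => j ≠ n) ∪ univ.filter (fun j => j ∉ T) := by
      ext j
      simp only [mem_filter, mem_univ, true_and, mem_union]
      constructor
      · intro h
        by_cases hj : j ∈ T
        · exact Or.inl ⟨hj, h⟩
        · exact Or.inr hj
      · rintro (⟨_, h⟩ | h)
        · exact h
        · exact fun e => h (e ▸ hn)
    have hdisj : Disjoint (T.filter (fun j => j ≠ n)) (univ.filter (fun j => j ∉ T)) := by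
      rw [Finset.disjoint_left]
      intro x hx hx'
      simp only [mem_filter] at hx hx'
      exact hx'.2 hx.1
    rw [hset, Finset.sum_union hdisj]
  -- the main algebraic identity
  have key : ∀ k, (∑ n ∈ T, (Γ n : ℂ) * (w k n - w k 0) * (Λ k * z k n))
      = ((Γ 0 * Γ 1 + Γ 1 * Γ 2 + Γ 2 * Γ 0 : ℝ) : ℂ)
        + ((Γ 1 : ℂ) * (w k 1 - w k 0) * R 1 k + (Γ 2 : ℂ) * (w k 2 - w k 0) * R 2 k) := by
    intro k
    have hwinj := (hncc k).2.2.1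
    have hab : w k 0 - w k 1 ≠ 0 := sub_ne_zero.mpr (fun h => h01 (hwinj h))
    have hac : w k 0 - w k 2 ≠ 0 := sub_ne_zero.mpr (fun h => h02 (hwinj h))
    have hbc : w k 1 - w k 2 ≠ 0 := sub_ne_zero.mpr (fun h => h12 (hwinj h))
    have hba : w k 1 - w k 0 ≠ 0 := sub_ne_zero.mpr (fun h => h01 (hwinj h).symm)
    have hca : w k 2 - w k 0 ≠ 0 := sub_ne_zero.mpr (fun h => h02 (hwinj h).symm)
    have hcb : w k 2 - w k 1 ≠ 0 := sub_ne_zero.mpr (fun h => h12 (hwinj h).symm)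
    have hcc := (hncc k).2.2.2.1
    have hsum : ∀ n ∈ T, Λ k * z k n
        = (∑ j ∈ T.filter (fun j => j ≠ n), (Γ j : ℂ) / (w k n - w k j)) + R n k :=
      fun n hn => (hcc n).trans (hsplit k n hn)
    have hTmem0 : (0 : Fin (M+3)) ∈ T := by simp [hT]
    have hTmem1 : (1 : Fin (M+3)) ∈ T := by simp [hT]
    have hTmem2 : (2 : Fin (M+3)) ∈ T := by simp [hT]
    have hexp : ∀ (f : Fin (M+3) → ℂ), (∑ n ∈ T, f n) = f 0 + f 1 + f 2 := by
      intro f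
      rw [hT, Finset.sum_insert (by simp [h01, h02]), Finset.sum_insert (by simp [h12]),
        Finset.sum_singleton, add_assoc]
    have hfil : ∀ (n : Fin (M+3)) (f : Fin (M+3) → ℂ),
        (∑ j ∈ T.filter (fun j => j ≠ n), f j)
          = (if (0:Fin (M+3)) ≠ n then f 0 else 0) + (if (1:Fin (M+3)) ≠ n then f 1 else 0)
            + (if (2:Fin (M+3)) ≠ n then f 2 else 0) := by
      intro n f
      rw [Finset.sum_filter, hexp]
    rw [hexp, hsum 0 hTmem0, hsum 1 hTmem1, hsum 2 hTmem2, hfil, hfil, hfil]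
    simp only [if_pos, if_neg, h01, h02, h12, h01.symm, h02.symm, h12.symm, ne_eq,
      not_true_eq_false, not_false_eq_true, if_true, if_false, not_not]
    push_cast
    field_simp
    ring
  -- limit of the left-hand side
  have hF : Tendsto (fun k => ∑ n ∈ T, (Γ n : ℂ) * (w k n - w k 0) * (Λ k * z k n))
      atTop (nhds 0) := by
    have : (0 : ℂ) = ∑ n ∈ T, (0 : ℂ) := by simp
    rw [this]
    apply tendsto_finset_sum
    intro n hn
    by_cases hn0 : n = 0
    · subst hn0
      simp only [sub_self, mul_zero, zero_mul, mul_comm]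
      simpa using (tendsto_const_nhds :
        Tendsto (fun _ : ℕ => (0:ℂ)) atTop (nhds 0))
    · obtain ⟨⟨C, hC⟩, -⟩ := hstroke n hn 0 (by simp [hT]) hn0
      have heq : ∀ k, (Γ n : ℂ) * (w k n - w k 0) * (Λ k * z k n)
          = ((Γ n : ℂ) * ((w k n - w k 0) / (ε k : ℂ)^2) * Λ k) * (z k n * (ε k : ℂ)^2) := by
        intro k
        have he : ((ε k : ℂ)^2) ≠ 0 := pow_ne_zero _ (hεne k)
        calc (Γ n : ℂ) * (w k n - w k 0) * (Λ k * z k n)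
            = ((Γ n : ℂ) * (w k n - w k 0) * (Λ k * z k n)) * ((ε k : ℂ)^2 / (ε k : ℂ)^2) := by
              rw [div_self he, mul_one]
          _ = _ := by rw [div_eq_mul_inv]; ring
      have hnull : Tendsto (fun k => z k n * (ε k : ℂ)^2) atTop (nhds 0) := by
        have h := hnocirc n hn
        have heq2 : ∀ k, z k n / ((ε k ^ (-2:ℤ) : ℝ) : ℂ) = z k n * (ε k : ℂ)^2 := by
          intro k
          have : ((ε k ^ (-2:ℤ) : ℝ) : ℂ) = ((ε k : ℂ)^2)⁻¹ := by
            push_cast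
            rw [zpow_neg]
            norm_cast
          rw [this, div_eq_mul_inv, inv_inv]
        exact (funext heq2 : _) ▸ h
      have hbdd : ∀ k, ‖(Γ n : ℂ) * ((w k n - w k 0) / (ε k : ℂ)^2) * Λ k‖
          ≤ |Γ n| * C := by
        intro k
        rw [norm_mul, norm_mul, hΛ1 k, mul_one, Complex.norm_real, Real.norm_eq_abs]
        exact mul_le_mul_of_nonneg_left (hC k) (abs_nonneg _)
      rw [funext heq]
      exact bdd_mul_null hbdd hnull
  -- limit of the remainder terms
  have hRlim : ∀ n ∈ T, n ≠ 0 →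
      Tendsto (fun k => (Γ n : ℂ) * (w k n - w k 0) * R n k) atTop (nhds 0) := by
    intro n hn hn0
    obtain ⟨⟨C, hC⟩, -⟩ := hstroke n hn 0 (by simp [hT]) hn0
    have heq : ∀ k, (Γ n : ℂ) * (w k n - w k 0) * R n k
        = ∑ l ∈ univ.filter (fun l => l ∉ T),
            ((Γ n : ℂ) * (Γ l : ℂ) * ((w k n - w k 0) / (ε k : ℂ)^2))
              * ((ε k : ℂ)^2 / (w k n - w k l)) := by
      intro k
      rw [hR, Finset.mul_sum]
      refine Finset.sum_congr rfl (fun l hl => ?_)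
      have hnl : w k n - w k l ≠ 0 := by
        have hwinj := (hncc k).2.2.1
        refine sub_ne_zero.mpr (fun h => ?_)
        have := hwinj h
        simp only [mem_filter] at hl
        exact hl.2 (this ▸ hn)
      have he : ((ε k : ℂ)^2) ≠ 0 := pow_ne_zero _ (hεne k)
      have hcanc : (w k n - w k 0) / (ε k : ℂ)^2 * ((ε k : ℂ)^2 / (w k n - w k l))
          = (w k n - w k 0) / (w k n - w k l) := div_mul_div_cancel₀ he
      rw [mul_assoc ((Γ n : ℂ) * (Γ l : ℂ)), hcanc]
      ring
    rw [funext heq]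
    have : (0 : ℂ) = ∑ l ∈ univ.filter (fun l => l ∉ T), (0 : ℂ) := by simp
    rw [this]
    apply tendsto_finset_sum
    intro l hl
    simp only [mem_filter, mem_univ, true_and] at hl
    have hnull := hiso n hn l hl
    have hbdd : ∀ k, ‖(Γ n : ℂ) * (Γ l : ℂ) * ((w k n - w k 0) / (ε k : ℂ)^2)‖
        ≤ |Γ n| * |Γ l| * C := by
      intro k
      rw [norm_mul, norm_mul, Complex.norm_real, Complex.norm_real, Real.norm_eq_abs, Real.norm_eq_abs]
      exact mul_le_mul_of_nonneg_left (hC k) (mul_nonneg (abs_nonneg _) (abs_nonneg _))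
    exact bdd_mul_null hbdd hnull
  have hClim : Tendsto (fun k => (Γ 1 : ℂ) * (w k 1 - w k 0) * R 1 k
      + (Γ 2 : ℂ) * (w k 2 - w k 0) * R 2 k) atTop (nhds 0) := by
    have := (hRlim 1 (by simp [hT]) h01.symm).add (hRlim 2 (by simp [hT]) h02.symm)
    simpa using this
  -- conclude
  have hconst : Tendsto (fun _ : ℕ => ((Γ 0 * Γ 1 + Γ 1 * Γ 2 + Γ 2 * Γ 0 : ℝ) : ℂ))
      atTop (nhds 0) := by
    have := hF.sub hClim
    simp only [sub_zero] at this
    refine this.congr (fun k => ?_)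
    rw [key k]
    ring
  have hL : ((Γ 0 * Γ 1 + Γ 1 * Γ 2 + Γ 2 * Γ 0 : ℝ) : ℂ) = 0 :=
    tendsto_nhds_unique tendsto_const_nhds hconst
  exact_mod_cast hL
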